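/- arXiv:2206.07640 — 2 statements merged into one kernel-verified Lean document; each statement's English description precedes it below -/
import Mathlib

section
/- Let a, p ∈ (0, δ] with δ ∈ (0, 1/2], and let D(a‖p) = a·ln(a/p) + (1−a)·ln((1−a)/(1−p)) denote the binary KL divergence. Then a·ln(a/p) + p − a − 3δ² ≤ D(a‖p) ≤ a·ln(a/p) + p − a + 3δ². -/
lemma log_one_sub_le (x : ℝ) (hx0 : 0 < x) (hx : x ≤ 1/2) :
    Real.log (1 - x) ≤ -x := by
  have h : (0:ℝ) < 1 - x := by linarith
  have := Real.log_le_sub_one_of_pos h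
  linarith

lemma le_log_one_sub (x : ℝ) (hx0 : 0 < x) (hx : x ≤ 1/2) :
    -(x + 2 * x ^ 2) ≤ Real.log (1 - x) := by
  have h : (0:ℝ) < 1 - x := by linarith
  have hinv : (0:ℝ) < (1 - x)⁻¹ := by positivity
  have h1 := Real.log_le_sub_one_of_pos hinv
  have h2 : Real.log (1 - x)⁻¹ = -Real.log (1 - x) := Real.log_inv _
  have h3 : (1 - x)⁻¹ - 1 = x / (1 - x) := by field_simp; ring
  have h4 : x / (1 - x) ≤ x + 2 * x ^ 2 := by
    rw [div_le_iff₀ h]; nlinarith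
  rw [h2, h3] at h1
  linarith

/-- Two-sided approximation of the binary KL divergence
`D(a‖p) = a·ln(a/p) + (1−a)·ln((1−a)/(1−p))` for `a, p ∈ (0, δ]`, `δ ∈ (0, 1/2]`. -/
theorem stmt3 (δ a p : ℝ) (hδ0 : 0 < δ) (hδ : δ ≤ 1 / 2)
    (ha0 : 0 < a) (ha : a ≤ δ) (hp0 : 0 < p) (hp : p ≤ δ) :
    a * Real.log (a / p) + p - a - 3 * δ ^ 2
        ≤ a * Real.log (a / p) + (1 - a) * Real.log ((1 - a) / (1 - p)) ∧
    a * Real.log (a / p) + (1 - a) * Real.log ((1 - a) / (1 - p))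
        ≤ a * Real.log (a / p) + p - a + 3 * δ ^ 2 := by
  have ha2 : a ≤ 1/2 := ha.trans hδ
  have hp2 : p ≤ 1/2 := hp.trans hδ
  have hA : (0:ℝ) < 1 - a := by linarith
  have hP : (0:ℝ) < 1 - p := by linarith
  have hlog : Real.log ((1 - a) / (1 - p)) = Real.log (1 - a) - Real.log (1 - p) :=
    Real.log_div (ne_of_gt hA) (ne_of_gt hP)
  have ha1 := log_one_sub_le a ha0 ha2
  have ha2' := le_log_one_sub a ha0 ha2
  have hp1 := log_one_sub_le p hp0 hp2
  have hp2' := le_log_one_sub p hp0 hp2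
  rw [hlog]
  constructor
  · nlinarith [mul_le_mul_of_nonneg_left (sub_le_sub ha2' hp1) hA.le,
      sq_nonneg a, sq_nonneg p, sq_nonneg (a - p), mul_pos ha0 hp0]
  · nlinarith [mul_le_mul_of_nonneg_left (sub_le_sub ha1 hp2') hA.le,
      sq_nonneg a, sq_nonneg p, sq_nonneg (a - p), mul_pos ha0 hp0]
end

section
/- Let P (= P_n) and Q (= Q_n) be distributions on ℝ^p, let A be an event with P(A) = 1 − o(1), and set P̃ = P|A. If there exists D such that χ²_{≤D}(P̃ ‖ Q) = O(1), then no polynomial f of degree ≤ D strongly separates P and Q, i.e. it cannot hold that sqrt(max{Var_P f, Var_Q f}) = o(|E_P f − E_Q f|). If χ²_{≤D}(P̃ ‖ Q) = o(1), then no degree-≤D polynomial weakly separates P and Q. -/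
open Filter Finset

lemma corelem {X : Type*} [Fintype X] [DecidableEq X] (P Q Pt Lt LD g : X → ℝ) (A : Finset X)
    (hP : ∀ x, 0 ≤ P x) (hP1 : ∑ x, P x = 1) (hQ : ∀ x, 0 ≤ Q x) (hQ1 : ∑ x, Q x = 1)
    (ha : 0 < ∑ x ∈ A, P x) (ha1 : ∑ x ∈ A, P x ≤ 1)
    (hPt : ∀ x, Pt x = (if x ∈ A then P x else 0) / ∑ y ∈ A, P y)
    (hLt : ∀ x, Pt x = Lt x * Q x)
    (horth1 : ∑ x, Q x * (Lt x - LD x) = 0)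
    (horthg : ∑ x, Q x * (Lt x - LD x) * g x = 0)
    (hEQ : ∑ x, Q x * g x = 0) (hEP : ∑ x, P x * g x = 1)
    (c : ℝ) (hc : 0 ≤ c)
    (hVarP : ∑ x, P x * (g x - 1) ^ 2 ≤ c ^ 2)
    (hVarQ : ∑ x, Q x * g x ^ 2 ≤ c ^ 2)
    (hsmall : Real.sqrt (1 - ∑ x ∈ A, P x) * Real.sqrt (c ^ 2 + 1) ≤ 1 / 4) :
    3 / 4 ≤ Real.sqrt ((∑ x, Q x * LD x ^ 2) - 1) * c := by
  set a := ∑ x ∈ A, P x with ha_def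
  have hPt_mul : ∀ h : X → ℝ, ∑ x, Pt x * h x = (∑ x ∈ A, P x * h x) / a := by
    intro h
    calc ∑ x, Pt x * h x = ∑ x, (if x ∈ A then P x * h x else 0) / a := by
          refine Finset.sum_congr rfl fun x _ => ?_
          rw [hPt]; split
          · ring
          · simp
      _ = (∑ x, if x ∈ A then P x * h x else 0) / a := by rw [Finset.sum_div]
      _ = (∑ x ∈ A, P x * h x) / a := by
          rw [Finset.sum_ite_mem, Finset.univ_inter]
  have hQLt : ∀ h : X → ℝ, ∑ x, Q x * Lt x * h x = ∑ x, Pt x * h x :=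
    fun h => Finset.sum_congr rfl fun x _ => by rw [hLt]; ring
  have hPtsum : ∑ x, Pt x = 1 := by
    have h := hPt_mul (fun _ => 1)
    simp only [mul_one] at h
    rw [h]; exact div_self (ne_of_gt ha)
  have hQLt1 : ∑ x, Q x * Lt x = 1 := by
    have h := hQLt (fun _ => 1)
    simpa [hPtsum] using h
  have hQLD1 : ∑ x, Q x * LD x = 1 := by
    have h : ∑ x, (Q x * Lt x - Q x * LD x) = 0 := by
      rw [← horth1]; exact Finset.sum_congr rfl fun x _ => by ring
    rw [Finset.sum_sub_distrib] at h
    linarith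
  have hEPtg : ∑ x, Pt x * g x = ∑ x, Q x * (LD x - 1) * g x := by
    have h : ∑ x, (Q x * Lt x * g x - Q x * LD x * g x) = 0 := by
      rw [← horthg]; exact Finset.sum_congr rfl fun x _ => by ring
    rw [Finset.sum_sub_distrib] at h
    have h3 : ∑ x, Q x * (LD x - 1) * g x = ∑ x, (Q x * LD x * g x - Q x * g x) :=
      Finset.sum_congr rfl fun x _ => by ring
    rw [h3, Finset.sum_sub_distrib, hEQ]
    have h4 := hQLt g
    linarith
  have hchi : (∑ x, Q x * LD x ^ 2) - 1 = ∑ x, Q x * (LD x - 1) ^ 2 := by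
    have h : ∑ x, Q x * (LD x - 1) ^ 2
        = ∑ x, (Q x * LD x ^ 2 - 2 * (Q x * LD x) + Q x) :=
      Finset.sum_congr rfl fun x _ => by ring
    rw [h, Finset.sum_add_distrib, Finset.sum_sub_distrib, ← Finset.mul_sum, hQLD1, hQ1]
    ring
  -- upper bound via Cauchy-Schwarz
  have hub : ∑ x, Pt x * g x ≤ Real.sqrt ((∑ x, Q x * LD x ^ 2) - 1) * c := by
    rw [hEPtg, hchi]
    have key : ∑ x, Q x * (LD x - 1) * g x
        = ∑ x, (Real.sqrt (Q x) * (LD x - 1)) * (Real.sqrt (Q x) * g x) := by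
      refine Finset.sum_congr rfl fun x _ => ?_
      rw [show Real.sqrt (Q x) * (LD x - 1) * (Real.sqrt (Q x) * g x)
          = Real.sqrt (Q x) * Real.sqrt (Q x) * ((LD x - 1) * g x) by ring,
        Real.mul_self_sqrt (hQ x)]
      ring
    rw [key]
    refine (Real.sum_mul_le_sqrt_mul_sqrt _ _ _).trans ?_
    have e1 : ∑ x, (Real.sqrt (Q x) * (LD x - 1)) ^ 2 = ∑ x, Q x * (LD x - 1) ^ 2 :=
      Finset.sum_congr rfl fun x _ => by rw [mul_pow, Real.sq_sqrt (hQ x)]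
    have e2 : ∑ x, (Real.sqrt (Q x) * g x) ^ 2 = ∑ x, Q x * g x ^ 2 :=
      Finset.sum_congr rfl fun x _ => by rw [mul_pow, Real.sq_sqrt (hQ x)]
    rw [e1, e2]
    exact mul_le_mul_of_nonneg_left
      ((Real.sqrt_le_sqrt hVarQ).trans_eq (Real.sqrt_sq hc)) (Real.sqrt_nonneg _)
  -- lower bound
  have hPg2 : ∑ x, P x * g x ^ 2 ≤ c ^ 2 + 1 := by
    have h : ∑ x, P x * (g x - 1) ^ 2
        = ∑ x, (P x * g x ^ 2 - 2 * (P x * g x) + P x) :=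
      Finset.sum_congr rfl fun x _ => by ring
    rw [Finset.sum_add_distrib, Finset.sum_sub_distrib, ← Finset.mul_sum, hEP, hP1] at h
    linarith
  have ht : |∑ x ∈ Aᶜ, P x * g x| ≤ 1 / 4 := by
    have hsq : (∑ x ∈ Aᶜ, P x * g x) ^ 2 ≤ (∑ x ∈ Aᶜ, P x) * (∑ x ∈ Aᶜ, P x * g x ^ 2) := by
      have key : ∑ x ∈ Aᶜ, P x * g x
          = ∑ x ∈ Aᶜ, Real.sqrt (P x) * (Real.sqrt (P x) * g x) := by
        refine Finset.sum_congr rfl fun x _ => ?_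
        rw [show Real.sqrt (P x) * (Real.sqrt (P x) * g x)
            = Real.sqrt (P x) * Real.sqrt (P x) * g x by ring, Real.mul_self_sqrt (hP x)]
      rw [key]
      refine (Finset.sum_mul_sq_le_sq_mul_sq _ _ _).trans_eq ?_
      congr 1
      · exact Finset.sum_congr rfl fun x _ => Real.sq_sqrt (hP x)
      · exact Finset.sum_congr rfl fun x _ => by rw [mul_pow, Real.sq_sqrt (hP x)]
    have h1 : ∑ x ∈ Aᶜ, P x = 1 - a := by
      have := Finset.sum_add_sum_compl A P
      rw [hP1] at this; linarith
    have h2 : ∑ x ∈ Aᶜ, P x * g x ^ 2 ≤ c ^ 2 + 1 :=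
      le_trans (Finset.sum_le_univ_sum_of_nonneg fun x => mul_nonneg (hP x) (sq_nonneg _)) hPg2
    have h3 : (∑ x ∈ Aᶜ, P x * g x) ^ 2 ≤ (1 - a) * (c ^ 2 + 1) := by
      rw [h1] at hsq
      exact hsq.trans (mul_le_mul_of_nonneg_left h2 (by linarith))
    calc |∑ x ∈ Aᶜ, P x * g x| = Real.sqrt ((∑ x ∈ Aᶜ, P x * g x) ^ 2) :=
          (Real.sqrt_sq_eq_abs _).symm
      _ ≤ Real.sqrt ((1 - a) * (c ^ 2 + 1)) := Real.sqrt_le_sqrt h3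
      _ = Real.sqrt (1 - a) * Real.sqrt (c ^ 2 + 1) := Real.sqrt_mul (by linarith) _
      _ ≤ 1 / 4 := hsmall
  have hAsum : ∑ x ∈ A, P x * g x = 1 - ∑ x ∈ Aᶜ, P x * g x := by
    have := Finset.sum_add_sum_compl A (fun x => P x * g x)
    rw [hEP] at this; linarith
  have hlb : 3 / 4 ≤ ∑ x, Pt x * g x := by
    rw [hPt_mul g, hAsum]
    have htle : ∑ x ∈ Aᶜ, P x * g x ≤ 1 / 4 := (abs_le.mp ht).2
    rw [le_div_iff₀ ha]
    nlinarith
  linarith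

open Filter

/-- The subspace of functions `{0,1}^p → ℝ` that are polynomials of degree at most `D`
(spanned by multilinear monomials on at most `D` coordinates). -/
def degLE (p D : ℕ) : Submodule ℝ ((Fin p → Bool) → ℝ) :=
  Submodule.span ℝ {f | ∃ S : Finset (Fin p), S.card ≤ D ∧
    f = fun x => ∏ i ∈ S, (if x i then (1 : ℝ) else 0)}

/-- Conditional low-degree lower bound (Lemma `lem:ld-cond`): if the degree-`D`
chi-squared divergence of the conditioned planted distribution `P̃ = P|A` from `Q`
is `O(1)` (resp. `o(1)`), then no degree-`≤D` polynomial strongly (resp. weakly)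
separates `P` and `Q`. Here `Lt` is the likelihood ratio `dP̃/dQ` and `LD` its
orthogonal projection onto degree-`≤D` polynomials. -/
theorem stmt14 (p : ℕ → ℕ) (P Q : ∀ n, (Fin (p n) → Bool) → ℝ)
    (hPpos : ∀ n x, 0 ≤ P n x) (hP1 : ∀ n, ∑ x, P n x = 1)
    (hQpos : ∀ n x, 0 ≤ Q n x) (hQ1 : ∀ n, ∑ x, Q n x = 1)
    (A : ∀ n, Finset (Fin (p n) → Bool))
    (hApos : ∀ n, 0 < ∑ x ∈ A n, P n x)
    (hA : Tendsto (fun n => ∑ x ∈ A n, P n x) atTop (nhds 1))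
    (D : ℕ → ℕ)
    (Pt : ∀ n, (Fin (p n) → Bool) → ℝ)
    (hPt : ∀ n x, Pt n x = (if x ∈ A n then P n x else 0) / ∑ y ∈ A n, P n y)
    (Lt : ∀ n, (Fin (p n) → Bool) → ℝ)
    (hLt : ∀ n x, Pt n x = Lt n x * Q n x)
    (LD : ∀ n, (Fin (p n) → Bool) → ℝ)
    (hLD : ∀ n, LD n ∈ degLE (p n) (D n))
    (hproj : ∀ n, ∀ f ∈ degLE (p n) (D n),
      ∑ x, Q n x * (Lt n x - LD n x) * f x = 0) :
    -- O(1) bound rules out strong separation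
    ((∃ C : ℝ, ∀ n, (∑ x, Q n x * LD n x ^ 2) - 1 ≤ C) →
      ¬ ∃ f : ∀ n, (Fin (p n) → Bool) → ℝ,
        (∀ n, f n ∈ degLE (p n) (D n)) ∧
        (∀ᶠ n in atTop,
          0 < |(∑ x, P n x * f n x) - (∑ x, Q n x * f n x)|) ∧
        ∀ ε : ℝ, 0 < ε → ∀ᶠ n in atTop,
          Real.sqrt (max (∑ x, P n x * (f n x - ∑ y, P n y * f n y) ^ 2)
                         (∑ x, Q n x * (f n x - ∑ y, Q n y * f n y) ^ 2))
            ≤ ε * |(∑ x, P n x * f n x) - (∑ x, Q n x * f n x)|) ∧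
    -- o(1) bound rules out weak separation
    (Tendsto (fun n => (∑ x, Q n x * LD n x ^ 2) - 1) atTop (nhds 0) →
      ¬ ∃ f : ∀ n, (Fin (p n) → Bool) → ℝ,
        (∀ n, f n ∈ degLE (p n) (D n)) ∧
        (∀ᶠ n in atTop,
          0 < |(∑ x, P n x * f n x) - (∑ x, Q n x * f n x)|) ∧
        ∃ C : ℝ, 0 < C ∧ ∀ᶠ n in atTop,
          Real.sqrt (max (∑ x, P n x * (f n x - ∑ y, P n y * f n y) ^ 2)
                         (∑ x, Q n x * (f n x - ∑ y, Q n y * f n y) ^ 2))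
            ≤ C * |(∑ x, P n x * f n x) - (∑ x, Q n x * f n x)|) := by
  have hone : ∀ n, (fun _ : Fin (p n) → Bool => (1 : ℝ)) ∈ degLE (p n) (D n) := fun n =>
    Submodule.subset_span ⟨∅, Nat.zero_le _, by funext x; simp⟩
  have horth1 : ∀ n, ∑ x, Q n x * (Lt n x - LD n x) = 0 := fun n => by
    have := hproj n (fun _ => 1) (hone n); simpa using this
  have ha1 : ∀ n, ∑ x ∈ A n, P n x ≤ 1 := fun n => by
    rw [← hP1 n]; exact Finset.sum_le_univ_sum_of_nonneg (hPpos n)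
  have key : ∀ (n : ℕ) (c : ℝ), 0 ≤ c → ∀ f : (Fin (p n) → Bool) → ℝ,
      f ∈ degLE (p n) (D n) →
      0 < |(∑ x, P n x * f x) - (∑ x, Q n x * f x)| →
      Real.sqrt (max (∑ x, P n x * (f x - ∑ y, P n y * f y) ^ 2)
                     (∑ x, Q n x * (f x - ∑ y, Q n y * f y) ^ 2))
        ≤ c * |(∑ x, P n x * f x) - (∑ x, Q n x * f x)| →
      Real.sqrt (1 - ∑ x ∈ A n, P n x) * Real.sqrt (c ^ 2 + 1) ≤ 1 / 4 →
      3 / 4 ≤ Real.sqrt ((∑ x, Q n x * LD n x ^ 2) - 1) * c := by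
    intro n c hc f hf hΔ hsep hsm
    set EP := ∑ x, P n x * f x with hEPdef
    set EQ := ∑ x, Q n x * f x with hEQdef
    set Δ := EP - EQ with hΔdef
    have hΔ0 : Δ ≠ 0 := by
      intro h; rw [h] at hΔ; simp at hΔ
    have hΔ2 : 0 < Δ ^ 2 := by positivity
    set g : (Fin (p n) → Bool) → ℝ := fun x => (f x - EQ) / Δ with hgdef
    have hgmem : g ∈ degLE (p n) (D n) := by
      have hrepr : g = Δ⁻¹ • f + (-(EQ / Δ)) • (fun _ => (1 : ℝ)) := by
        funext x
        simp only [hgdef, Pi.add_apply, Pi.smul_apply, smul_eq_mul]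
        ring
      rw [hrepr]
      exact Submodule.add_mem _ (Submodule.smul_mem _ _ hf) (Submodule.smul_mem _ _ (hone n))
    have hmax0 : 0 ≤ max (∑ x, P n x * (f x - EP) ^ 2) (∑ x, Q n x * (f x - EQ) ^ 2) :=
      le_trans (Finset.sum_nonneg fun x _ => mul_nonneg (hQpos n x) (sq_nonneg _))
        (le_max_right _ _)
    have hmaxle : max (∑ x, P n x * (f x - EP) ^ 2) (∑ x, Q n x * (f x - EQ) ^ 2)
        ≤ c ^ 2 * Δ ^ 2 := by
      calc max _ _ = Real.sqrt (max (∑ x, P n x * (f x - EP) ^ 2)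
              (∑ x, Q n x * (f x - EQ) ^ 2)) ^ 2 := (Real.sq_sqrt hmax0).symm
        _ ≤ (c * |Δ|) ^ 2 := pow_le_pow_left₀ (Real.sqrt_nonneg _) hsep 2
        _ = c ^ 2 * Δ ^ 2 := by rw [mul_pow, sq_abs]
    have hVQ : ∑ x, Q n x * g x ^ 2 ≤ c ^ 2 := by
      have e : ∀ x, Q n x * g x ^ 2 = Q n x * (f x - EQ) ^ 2 / Δ ^ 2 := fun x => by
        simp only [hgdef, div_pow]; ring
      rw [Finset.sum_congr rfl fun x _ => e x, ← Finset.sum_div, div_le_iff₀ hΔ2]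
      exact le_trans (le_max_right _ _) hmaxle
    have hVP : ∑ x, P n x * (g x - 1) ^ 2 ≤ c ^ 2 := by
      have e : ∀ x, P n x * (g x - 1) ^ 2 = P n x * (f x - EP) ^ 2 / Δ ^ 2 := fun x => by
        have h1 : g x - 1 = (f x - EP) / Δ := by
          simp only [hgdef]
          field_simp
          rw [hΔdef]; ring
        rw [h1, div_pow]; ring
      rw [Finset.sum_congr rfl fun x _ => e x, ← Finset.sum_div, div_le_iff₀ hΔ2]
      exact le_trans (le_max_left _ _) hmaxle
    have hEQg : ∑ x, Q n x * g x = 0 := by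
      have e : ∀ x, Q n x * g x = (Q n x * f x - EQ * Q n x) / Δ := fun x => by
        simp only [hgdef]; ring
      rw [Finset.sum_congr rfl fun x _ => e x, ← Finset.sum_div, Finset.sum_sub_distrib,
        ← Finset.mul_sum, hQ1 n, ← hEQdef]
      simp
    have hEPg : ∑ x, P n x * g x = 1 := by
      have e : ∀ x, P n x * g x = (P n x * f x - EQ * P n x) / Δ := fun x => by
        simp only [hgdef]; ring
      rw [Finset.sum_congr rfl fun x _ => e x, ← Finset.sum_div, Finset.sum_sub_distrib,
        ← Finset.mul_sum, hP1 n, ← hEPdef, mul_one, ← hΔdef]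
      exact div_self hΔ0
    exact corelem (P n) (Q n) (Pt n) (Lt n) (LD n) g (A n) (hPpos n) (hP1 n) (hQpos n)
      (hQ1 n) (hApos n) (ha1 n) (hPt n) (hLt n) (horth1 n) (hproj n g hgmem) hEQg hEPg
      c hc hVP hVQ hsm
  constructor
  · rintro ⟨C, hC⟩ ⟨f, hfdeg, hΔev, hsep⟩
    set s := Real.sqrt (max C 0) with hsdef
    have hs0 : 0 ≤ s := Real.sqrt_nonneg _
    set ε : ℝ := (1 / 2) / (s + 1) with hεdef
    have hε : 0 < ε := by positivity
    set u := Real.sqrt (ε ^ 2 + 1) with hudef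
    have hu1 : (1 : ℝ) ≤ u := by
      have h := Real.sqrt_le_sqrt (show (1 : ℝ) ≤ ε ^ 2 + 1 by nlinarith)
      rwa [Real.sqrt_one] at h
    have hu0 : 0 < u := lt_of_lt_of_le one_pos hu1
    have hAev : ∀ᶠ n in atTop, 1 - (1 / (4 * u)) ^ 2 < ∑ x ∈ A n, P n x :=
      hA.eventually (eventually_gt_nhds (sub_lt_self 1 (by positivity)))
    obtain ⟨n, h1, h2, h3⟩ := (hΔev.and ((hsep ε hε).and hAev)).exists
    have hsm : Real.sqrt (1 - ∑ x ∈ A n, P n x) * u ≤ 1 / 4 := by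
      have hle : Real.sqrt (1 - ∑ x ∈ A n, P n x) ≤ 1 / (4 * u) := by
        have h4 : 1 - ∑ x ∈ A n, P n x ≤ (1 / (4 * u)) ^ 2 := by linarith [h3]
        calc Real.sqrt (1 - ∑ x ∈ A n, P n x) ≤ Real.sqrt ((1 / (4 * u)) ^ 2) :=
              Real.sqrt_le_sqrt h4
          _ = 1 / (4 * u) := Real.sqrt_sq (by positivity)
      calc Real.sqrt (1 - ∑ x ∈ A n, P n x) * u ≤ (1 / (4 * u)) * u :=
            mul_le_mul_of_nonneg_right hle hu0.le
        _ = 1 / 4 := by field_simp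
    have hkey := key n ε hε.le (f n) (hfdeg n) h1 h2 hsm
    have hχ : Real.sqrt ((∑ x, Q n x * LD n x ^ 2) - 1) ≤ s :=
      Real.sqrt_le_sqrt (le_trans (hC n) (le_max_left _ _))
    have h4 : 3 / 4 ≤ s * ε := le_trans hkey (mul_le_mul_of_nonneg_right hχ hε.le)
    have hsp : (0 : ℝ) < s + 1 := by linarith
    have h5 : s * ε * (s + 1) = s * (1 / 2) := by
      rw [hεdef]; field_simp
    have h6 := mul_le_mul_of_nonneg_right h4 hsp.le
    rw [h5] at h6
    linarith
  · rintro hχ ⟨f, hfdeg, hΔev, C, hCpos, hsep⟩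
    set u := Real.sqrt (C ^ 2 + 1) with hudef
    have hu1 : (1 : ℝ) ≤ u := by
      have h := Real.sqrt_le_sqrt (show (1 : ℝ) ≤ C ^ 2 + 1 by nlinarith)
      rwa [Real.sqrt_one] at h
    have hu0 : 0 < u := lt_of_lt_of_le one_pos hu1
    have hAev : ∀ᶠ n in atTop, 1 - (1 / (4 * u)) ^ 2 < ∑ x ∈ A n, P n x :=
      hA.eventually (eventually_gt_nhds (sub_lt_self 1 (by positivity)))
    have hχev : ∀ᶠ n in atTop, (∑ x, Q n x * LD n x ^ 2) - 1 < (1 / (2 * C)) ^ 2 :=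
      hχ.eventually (eventually_lt_nhds (by positivity))
    obtain ⟨n, h1, h2, h3, h4⟩ := (hΔev.and (hsep.and (hAev.and hχev))).exists
    have hsm : Real.sqrt (1 - ∑ x ∈ A n, P n x) * u ≤ 1 / 4 := by
      have hle : Real.sqrt (1 - ∑ x ∈ A n, P n x) ≤ 1 / (4 * u) := by
        have h5 : 1 - ∑ x ∈ A n, P n x ≤ (1 / (4 * u)) ^ 2 := by linarith
        calc Real.sqrt (1 - ∑ x ∈ A n, P n x) ≤ Real.sqrt ((1 / (4 * u)) ^ 2) :=
              Real.sqrt_le_sqrt h5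
          _ = 1 / (4 * u) := Real.sqrt_sq (by positivity)
      calc Real.sqrt (1 - ∑ x ∈ A n, P n x) * u ≤ (1 / (4 * u)) * u :=
            mul_le_mul_of_nonneg_right hle hu0.le
        _ = 1 / 4 := by field_simp
    have hkey := key n C hCpos.le (f n) (hfdeg n) h1 h2 hsm
    have hχn : Real.sqrt ((∑ x, Q n x * LD n x ^ 2) - 1) ≤ 1 / (2 * C) :=
      (Real.sqrt_le_sqrt h4.le).trans_eq (Real.sqrt_sq (by positivity))
    have h5 : 3 / 4 ≤ (1 / (2 * C)) * C :=
      le_trans hkey (mul_le_mul_of_nonneg_right hχn hCpos.le)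
    have h6 : (1 / (2 * C)) * C = 1 / 2 := by field_simp
    linarith
end
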